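/- Let p ∈ (1,2), a, b positive definite m×m matrices. Then (1/2)tr(a^p) + (1/2)tr(b^p) − tr(((a+b)/2)^p) ≤ (1/4)·tr[(a − b)(a^{p−1} − b^{p−1})]. -/

import Mathlib

open Matrix
open scoped ComplexOrder

namespace BecknerAux

variable {m : ℕ}

lemma entry_conj_diagonal (U V : Matrix (Fin m) (Fin m) ℂ) (d : Fin m → ℝ) (k : Fin m) :
    ((star U * (V * diagonal (fun j => (d j : ℂ)) * star V) * U) k k) =
      ∑ j, (d j : ℂ) * (star ((star V * U) j k) * ((star V * U) j k)) := by
  have h1 : star U * (V * diagonal (fun j => (d j : ℂ)) * star V) * U =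
      star (star V * U) * (diagonal (fun j => (d j : ℂ)) * (star V * U)) := by
    simp [mul_assoc]
  rw [h1]
  simp [Matrix.mul_apply, Matrix.diagonal, Matrix.star_apply, Finset.mul_sum, Finset.sum_mul,
    mul_comm, mul_assoc, mul_left_comm]
  exact Finset.sum_congr rfl fun x _ => Finset.sum_comm

lemma entry_conj_diagonal_re (U V : Matrix (Fin m) (Fin m) ℂ) (d : Fin m → ℝ) (k : Fin m) :
    ((star U * (V * diagonal (fun j => (d j : ℂ)) * star V) * U) k k).re =
      ∑ j, d j * Complex.normSq ((star V * U) j k) := by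
  rw [entry_conj_diagonal, Complex.re_sum]
  refine Finset.sum_congr rfl fun j _ => ?_
  rw [show (star ((star V * U) j k) * ((star V * U) j k)) =
    (Complex.normSq ((star V * U) j k) : ℂ) by
      rw [Complex.star_def, Complex.normSq_eq_conj_mul_self]]
  rw [← Complex.ofReal_mul, Complex.ofReal_re]

lemma sum_normSq_col (W : Matrix (Fin m) (Fin m) ℂ) (hW : star W * W = 1)
    (k : Fin m) : ∑ j, Complex.normSq (W j k) = 1 := by
  have h1 : (star W * W) k k = 1 := by
    rw [hW]
    simp
  have h2 : (star W * W) k k = ∑ j, (Complex.normSq (W j k) : ℂ) := by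
    simp only [Matrix.mul_apply, Matrix.star_apply]
    refine Finset.sum_congr rfl fun j _ => ?_
    rw [Complex.star_def, Complex.normSq_eq_conj_mul_self]
  have := h1 ▸ h2
  have := congrArg Complex.re this.symm
  simpa [Complex.re_sum] using this

lemma cfc_explicit {B : Matrix (Fin m) (Fin m) ℂ} (hB : B.IsHermitian) (f : ℝ → ℝ) :
    hB.cfc f = (hB.eigenvectorUnitary : Matrix (Fin m) (Fin m) ℂ) *
      diagonal (fun j => ((f (hB.eigenvalues j) : ℝ) : ℂ)) *
      star (hB.eigenvectorUnitary : Matrix (Fin m) (Fin m) ℂ) := rfl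

lemma spectral_explicit {B : Matrix (Fin m) (Fin m) ℂ} (hB : B.IsHermitian) :
    B = (hB.eigenvectorUnitary : Matrix (Fin m) (Fin m) ℂ) *
      diagonal (fun j => ((hB.eigenvalues j : ℝ) : ℂ)) *
      star (hB.eigenvectorUnitary : Matrix (Fin m) (Fin m) ℂ) := hB.spectral_theorem

/-- Jensen's inequality for quadratic forms: `⟨u_k, B^s u_k⟩ ≤ ⟨u_k, B u_k⟩^s`. -/
lemma jensen {B : Matrix (Fin m) (Fin m) ℂ} (hB : B.PosDef)
    (U : Matrix (Fin m) (Fin m) ℂ) (hU : star U * U = 1)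
    {s : ℝ} (hs : 0 < s) (hs1 : s < 1) (k : Fin m) :
    ((star U * (hB.1.cfc fun x : ℝ => x ^ s) * U) k k).re ≤
      (((star U * B * U) k k).re) ^ s := by
  set V : Matrix (Fin m) (Fin m) ℂ := (hB.1.eigenvectorUnitary : Matrix (Fin m) (Fin m) ℂ)
  have hV : V * star V = 1 := (Matrix.mem_unitaryGroup_iff).mp (hB.1.eigenvectorUnitary).2
  set W : Matrix (Fin m) (Fin m) ℂ := star V * U with hWdef
  have hW : star W * W = 1 := by
    rw [hWdef, StarMul.star_mul, star_star, mul_assoc, ← mul_assoc V _ _, hV, one_mul, hU]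
  set w : Fin m → ℝ := fun j => Complex.normSq (W j k) with hwdef
  have hw0 : ∀ j, 0 ≤ w j := fun j => Complex.normSq_nonneg _
  have hw1 : ∑ j, w j = 1 := sum_normSq_col W hW k
  set β : Fin m → ℝ := hB.1.eigenvalues with hβdef
  have hβ0 : ∀ j, (0:ℝ) ≤ β j := fun j => (hB.eigenvalues_pos j).le
  have hL : ((star U * (hB.1.cfc fun x : ℝ => x ^ s) * U) k k).re = ∑ j, (β j ^ s) * w j := by
    rw [cfc_explicit, entry_conj_diagonal_re]
  have hR : ((star U * B * U) k k).re = ∑ j, β j * w j := by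
    conv_lhs => rw [spectral_explicit hB.1]
    rw [entry_conj_diagonal_re]
  rw [hL, hR]
  have := (Real.concaveOn_rpow hs.le hs1.le).le_map_sum (t := Finset.univ)
    (w := w) (p := β) (fun j _ => hw0 j) hw1 (fun j _ => hβ0 j)
  simp only [smul_eq_mul] at this
  calc ∑ j, (β j ^ s) * w j = ∑ j, w j * β j ^ s := by
        exact Finset.sum_congr rfl fun j _ => mul_comm _ _
    _ ≤ (∑ j, w j * β j) ^ s := this
    _ = (∑ j, β j * w j) ^ s := by
        congr 1
        exact Finset.sum_congr rfl fun j _ => mul_comm _ _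

lemma trace_cfc_mul {A : Matrix (Fin m) (Fin m) ℂ} (hA : A.IsHermitian) (f : ℝ → ℝ)
    (M : Matrix (Fin m) (Fin m) ℂ) :
    Matrix.trace (hA.cfc f * M) =
      ∑ k, (f (hA.eigenvalues k) : ℂ) *
        ((star (hA.eigenvectorUnitary : Matrix (Fin m) (Fin m) ℂ) * M *
          (hA.eigenvectorUnitary : Matrix (Fin m) (Fin m) ℂ)) k k) := by
  set U : Matrix (Fin m) (Fin m) ℂ := (hA.eigenvectorUnitary : Matrix (Fin m) (Fin m) ℂ)
  have h1 : hA.cfc f * M = U * (diagonal (RCLike.ofReal ∘ f ∘ hA.eigenvalues) * (star U * M)) := by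
    simp [Matrix.IsHermitian.cfc, mul_assoc]; rfl
  rw [h1, Matrix.trace_mul_comm]
  simp [Matrix.trace, Matrix.diag, Matrix.mul_apply, Matrix.diagonal, Finset.mul_sum,
    Finset.sum_mul, mul_comm, mul_assoc, mul_left_comm]

lemma conj_self {A : Matrix (Fin m) (Fin m) ℂ} (hA : A.IsHermitian) :
    star (hA.eigenvectorUnitary : Matrix (Fin m) (Fin m) ℂ) * A *
      (hA.eigenvectorUnitary : Matrix (Fin m) (Fin m) ℂ) =
      diagonal (fun j => ((hA.eigenvalues j : ℝ) : ℂ)) := by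
  set U : Matrix (Fin m) (Fin m) ℂ := (hA.eigenvectorUnitary : Matrix (Fin m) (Fin m) ℂ)
  have hU : star U * U = 1 := (Matrix.mem_unitaryGroup_iff').mp (hA.eigenvectorUnitary).2
  conv_lhs => rw [hA.spectral_theorem]
  calc star U * (U * diagonal (RCLike.ofReal ∘ hA.eigenvalues) * star U) * U
      = (star U * U) * diagonal (RCLike.ofReal ∘ hA.eigenvalues) * (star U * U) := by
        simp only [mul_assoc]
    _ = diagonal (fun j => ((hA.eigenvalues j : ℝ) : ℂ)) := by
        rw [hU]; simp [Function.comp]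

lemma trace_cfc_re {A : Matrix (Fin m) (Fin m) ℂ} (hA : A.IsHermitian) (f : ℝ → ℝ) :
    (Matrix.trace (hA.cfc f)).re = ∑ k, f (hA.eigenvalues k) := by
  set U : Matrix (Fin m) (Fin m) ℂ := (hA.eigenvectorUnitary : Matrix (Fin m) (Fin m) ℂ)
  have hU : star U * U = 1 := (Matrix.mem_unitaryGroup_iff').mp (hA.eigenvectorUnitary).2
  have h1 : Matrix.trace (hA.cfc f) =
      Matrix.trace (diagonal (RCLike.ofReal ∘ f ∘ hA.eigenvalues)) := by
    rw [Matrix.IsHermitian.cfc, Unitary.conjStarAlgAut_apply, Matrix.trace_mul_comm, ← mul_assoc, hU, one_mul]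
  rw [h1, Matrix.trace_diagonal]
  simp [Complex.re_sum]

lemma trace_mul_cfc_re {A : Matrix (Fin m) (Fin m) ℂ} (hA : A.IsHermitian) (f : ℝ → ℝ)
    (M : Matrix (Fin m) (Fin m) ℂ) :
    (Matrix.trace (M * hA.cfc f)).re =
      ∑ k, f (hA.eigenvalues k) *
        ((star (hA.eigenvectorUnitary : Matrix (Fin m) (Fin m) ℂ) * M *
          (hA.eigenvectorUnitary : Matrix (Fin m) (Fin m) ℂ)) k k).re := by
  rw [Matrix.trace_mul_comm, trace_cfc_mul, Complex.re_sum]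
  exact Finset.sum_congr rfl fun k _ => Complex.re_ofReal_mul _ _

lemma trace_self_mul_cfc_re {A : Matrix (Fin m) (Fin m) ℂ} (hA : A.PosDef) {s : ℝ} :
    (Matrix.trace (A * hA.1.cfc fun x : ℝ => x ^ s)).re =
      ∑ k, (hA.1.eigenvalues k) ^ (s + 1) := by
  rw [trace_mul_cfc_re]
  refine Finset.sum_congr rfl fun k _ => ?_
  rw [conj_self hA.1]
  have hk : 0 < hA.1.eigenvalues k := hA.eigenvalues_pos k
  rw [Real.rpow_add hk, Real.rpow_one]
  simp [Matrix.diagonal_apply_eq]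

lemma diag_conj_nonneg {B : Matrix (Fin m) (Fin m) ℂ} (hB : B.PosSemidef)
    (U : Matrix (Fin m) (Fin m) ℂ) (k : Fin m) :
    0 ≤ ((star U * B * U) k k).re := by
  have h : (star U * B * U).PosSemidef := by
    rw [show star U = Uᴴ from rfl]
    exact hB.conjTranspose_mul_mul_same U
  have h2 := h.re_dotProduct_nonneg (Pi.single k 1)
  simpa [dotProduct, Matrix.mulVec, Pi.single_apply] using h2

lemma smul_posdef {M : Matrix (Fin m) (Fin m) ℂ} (hM : M.PosDef) :
    (((1/2:ℝ):ℂ) • M).PosDef := by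
  refine Matrix.PosDef.of_dotProduct_mulVec_pos ?_ ?_
  · have h1 := hM.1
    rw [Matrix.IsHermitian, Matrix.conjTranspose_smul, h1]
    norm_num
  · intro x hx
    have h := hM.dotProduct_mulVec_pos hx
    rw [Matrix.smul_mulVec, dotProduct_smul]
    rw [Complex.lt_def] at h ⊢
    obtain ⟨h1, h2⟩ := h
    constructor
    · rw [smul_eq_mul, Complex.re_ofReal_mul]
      simp only [Complex.zero_re] at h1 ⊢
      linarith
    · rw [smul_eq_mul]
      simp only [Complex.zero_im] at h2 ⊢
      simp [Complex.mul_im, ← h2]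

lemma cfc_id' {B : Matrix (Fin m) (Fin m) ℂ} (hB : B.IsHermitian) :
    hB.cfc (fun x : ℝ => x) = B := by
  conv_rhs => rw [hB.spectral_theorem]
  rfl

end BecknerAux

/-- Matrix power `A^q` (real exponent) via the continuous functional calculus. -/
noncomputable def mpow {m : ℕ} (A : Matrix (Fin m) (Fin m) ℂ) (q : ℝ) :
    Matrix (Fin m) (Fin m) ℂ :=
  cfc (fun x : ℝ => x ^ q) A

/-- two-point matrix-valued Beckner inequality: for `p ∈ (1,2)` and positive
definite `a, b`,
`(1/2)tr(a^p) + (1/2)tr(b^p) − tr(((a+b)/2)^p) ≤ (1/4)·tr[(a − b)(a^{p−1} − b^{p−1})]`. -/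
theorem two_point_matrix_beckner {m : ℕ} (p : ℝ) (hp : p ∈ Set.Ioo (1 : ℝ) 2)
    (a b : Matrix (Fin m) (Fin m) ℂ) (ha : a.PosDef) (hb : b.PosDef) :
    (1 / 2) * (Matrix.trace (mpow a p)).re + (1 / 2) * (Matrix.trace (mpow b p)).re -
        (Matrix.trace (mpow (((1 / 2 : ℝ) : ℂ) • (a + b)) p)).re ≤
      (1 / 4) * (Matrix.trace ((a - b) * (mpow a (p - 1) - mpow b (p - 1)))).re := by
  obtain ⟨hp1, hp2⟩ := hp
  set s : ℝ := p - 1 with hs_def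
  have hs0 : 0 < s := by simp only [hs_def]; linarith
  have hs1 : s < 1 := by simp only [hs_def]; linarith
  have hsp : s + 1 = p := by simp only [hs_def]; ring
  set c : Matrix (Fin m) (Fin m) ℂ := ((1 / 2 : ℝ) : ℂ) • (a + b) with hc_def
  have hc : c.PosDef := BecknerAux.smul_posdef (ha.add hb)
  set U : Matrix (Fin m) (Fin m) ℂ := (hc.1.eigenvectorUnitary : Matrix (Fin m) (Fin m) ℂ)
    with hU_def
  have hU : star U * U = 1 := (Matrix.mem_unitaryGroup_iff').mp (hc.1.eigenvectorUnitary).2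
  set γ : Fin m → ℝ := hc.1.eigenvalues with hγ_def
  have hγpos : ∀ k, 0 < γ k := fun k => hc.eigenvalues_pos k
  -- rewrite mpow as IsHermitian.cfc
  have hma : mpow a p = ha.1.cfc (fun x : ℝ => x ^ p) := ha.1.cfc_eq _
  have hmb : mpow b p = hb.1.cfc (fun x : ℝ => x ^ p) := hb.1.cfc_eq _
  have hmc : mpow c p = hc.1.cfc (fun x : ℝ => x ^ p) := hc.1.cfc_eq _
  have hmas : mpow a s = ha.1.cfc (fun x : ℝ => x ^ s) := ha.1.cfc_eq _
  have hmbs : mpow b s = hb.1.cfc (fun x : ℝ => x ^ s) := hb.1.cfc_eq _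
  -- traces of powers
  have hTa : (Matrix.trace (mpow a p)).re = ∑ k, (ha.1.eigenvalues k) ^ p := by
    rw [hma, BecknerAux.trace_cfc_re]
  have hTb : (Matrix.trace (mpow b p)).re = ∑ k, (hb.1.eigenvalues k) ^ p := by
    rw [hmb, BecknerAux.trace_cfc_re]
  have hTc : (Matrix.trace (mpow c p)).re = ∑ k, γ k ^ p := by
    rw [hmc, BecknerAux.trace_cfc_re]
  -- self-product traces
  have hTaa : (Matrix.trace (a * mpow a s)).re = ∑ k, (ha.1.eigenvalues k) ^ p := by
    rw [hmas, BecknerAux.trace_self_mul_cfc_re ha, hsp]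
  have hTbb : (Matrix.trace (b * mpow b s)).re = ∑ k, (hb.1.eigenvalues k) ^ p := by
    rw [hmbs, BecknerAux.trace_self_mul_cfc_re hb, hsp]
  -- THE KEY INEQUALITY : tr(c(aˢ+bˢ)) ≤ 2 tr(c^p)
  have hkey : (Matrix.trace (c * (mpow a s + mpow b s))).re ≤ 2 * ∑ k, γ k ^ p := by
    have hc_cfc : c * (mpow a s + mpow b s) =
        hc.1.cfc (fun x : ℝ => x) * (mpow a s + mpow b s) := by
      rw [BecknerAux.cfc_id' hc.1]
    rw [hc_cfc, BecknerAux.trace_cfc_mul, Complex.re_sum]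
    have hsplit : ∀ k, ((star U * (mpow a s + mpow b s) * U) k k) =
        ((star U * mpow a s * U) k k) + ((star U * mpow b s * U) k k) := by
      intro k
      rw [mul_add, add_mul]
      simp [Matrix.add_apply]
    have hstep : ∀ k, ((γ k : ℂ) * ((star U * (mpow a s + mpow b s) * U) k k)).re ≤
        2 * γ k ^ p := by
      intro k
      rw [Complex.re_ofReal_mul, hsplit k]
      set x : ℝ := ((star U * a * U) k k).re with hx_def
      set y : ℝ := ((star U * b * U) k k).re with hy_def
      have hx0 : 0 ≤ x := BecknerAux.diag_conj_nonneg ha.posSemidef U k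
      have hy0 : 0 ≤ y := BecknerAux.diag_conj_nonneg hb.posSemidef U k
      have hxy : x + y = 2 * γ k := by
        have h1 : star U * a * U + star U * b * U = star U * (a + b) * U := by
          rw [mul_add, add_mul]
        have h2 : star U * (a + b) * U = (2 : ℂ) • diagonal (fun j => ((γ j : ℝ) : ℂ)) := by
          have hab : a + b = (2 : ℂ) • c := by
            rw [hc_def, smul_smul]
            norm_num
          rw [hab, Matrix.mul_smul, Matrix.smul_mul, BecknerAux.conj_self hc.1]
        have h3 : (star U * a * U) k k + (star U * b * U) k k = 2 * (γ k : ℂ) := by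
          have := congrArg (fun M : Matrix (Fin m) (Fin m) ℂ => M k k) (h1.trans h2)
          simpa [Matrix.add_apply, Matrix.smul_apply, Matrix.diagonal_apply_eq] using this
        have := congrArg Complex.re h3
        simpa [hx_def, hy_def] using this
      have hJa : ((star U * mpow a s * U) k k).re ≤ x ^ s := by
        rw [hmas]; exact BecknerAux.jensen ha U hU hs0 hs1 k
      have hJb : ((star U * mpow b s * U) k k).re ≤ y ^ s := by
        rw [hmbs]; exact BecknerAux.jensen hb U hU hs0 hs1 k
      have h2pt : x ^ s + y ^ s ≤ 2 * γ k ^ s := by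
        have hcc := (Real.concaveOn_rpow hs0.le hs1.le).2 (Set.mem_Ici.mpr hx0)
          (Set.mem_Ici.mpr hy0) (by norm_num : (0:ℝ) ≤ 1/2) (by norm_num : (0:ℝ) ≤ 1/2)
          (by norm_num)
        have hmid : (1/2 : ℝ) • x + (1/2 : ℝ) • y = γ k := by
          simp only [smul_eq_mul]; linarith
        rw [hmid] at hcc
        simp only [smul_eq_mul] at hcc
        linarith
      have hpow : γ k * (2 * γ k ^ s) = 2 * γ k ^ p := by
        rw [← hsp, Real.rpow_add (hγpos k), Real.rpow_one]
        ring
      have hadd : ((star U * mpow a s * U) k k + (star U * mpow b s * U) k k).re ≤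
          x ^ s + y ^ s := by
        rw [Complex.add_re]
        exact add_le_add hJa hJb
      calc γ k * ((star U * mpow a s * U) k k + (star U * mpow b s * U) k k).re
          ≤ γ k * (x ^ s + y ^ s) := by
            exact mul_le_mul_of_nonneg_left hadd (hγpos k).le
        _ ≤ γ k * (2 * γ k ^ s) := mul_le_mul_of_nonneg_left h2pt (hγpos k).le
        _ = 2 * γ k ^ p := hpow
    calc ∑ k, ((γ k : ℂ) * ((star U * (mpow a s + mpow b s) * U) k k)).re
        ≤ ∑ k, 2 * γ k ^ p := Finset.sum_le_sum fun k _ => hstep k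
      _ = 2 * ∑ k, γ k ^ p := by rw [Finset.mul_sum]
  -- expansion of the right-hand side
  have hexp : (a - b) * (mpow a s - mpow b s) =
      (a * mpow a s + a * mpow a s) + (b * mpow b s + b * mpow b s) -
        (a + b) * (mpow a s + mpow b s) := by
    noncomm_ring
  have hab2 : (a + b) * (mpow a s + mpow b s) = (2:ℂ) • (c * (mpow a s + mpow b s)) := by
    have hab : a + b = (2 : ℂ) • c := by
      rw [hc_def, smul_smul]
      norm_num
    rw [hab, Matrix.smul_mul]
  have hRre : (Matrix.trace ((a - b) * (mpow a s - mpow b s))).re =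
      2 * (Matrix.trace (a * mpow a s)).re + 2 * (Matrix.trace (b * mpow b s)).re -
        2 * (Matrix.trace (c * (mpow a s + mpow b s))).re := by
    rw [hexp, hab2, Matrix.trace_sub, Matrix.trace_add, Matrix.trace_add, Matrix.trace_add,
      Matrix.trace_smul]
    simp only [Complex.sub_re, Complex.add_re, smul_eq_mul, Complex.mul_re]
    norm_num
    ring
  rw [hRre, hTaa, hTbb, hTa, hTb, hTc]
  linarith [hkey]
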